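/- arXiv:1106.1601 — 2 statements merged into one kernel-verified Lean document; each statement's English description precedes it below -/
import Mathlib

section
/- Let G be a finite abelian group with |G| = N, let Γ be a finite set of characters of G, and let ε = (ε_γ)_{γ∈Γ} be a tuple of reals in (0,1]. Then |B(Γ, ε)| ≥ (N/2) · ∏_{γ∈Γ} ε_γ. -/
/-- For `z` on the unit circle, `‖z‖ = |arg z| / (2π)`. -/
noncomputable def bohrNorm (z : ℂ) : ℝ := |Complex.arg z| / (2 * Real.pi)

open Classical in
/-- The Bohr set `B(Γ, ε) = {n ∈ G : ‖γ(n)‖ < ε_γ for all γ ∈ Γ}`. -/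
noncomputable def bohrSet {G : Type*} [AddCommGroup G] [Fintype G]
    (Γ : Finset (AddChar G ℂ)) (ε : AddChar G ℂ → ℝ) : Finset G :=
  Finset.univ.filter fun n => ∀ γ ∈ Γ, bohrNorm (γ n) < ε γ

/-- A Bohr set `B(Γ, ε)` of dimension `d = |Γ|` is regular if for all `η` with
`d|η| ≤ 1/100` one has `(1 − 100d|η|)|B_1| < |B_{1+η}| < (1 + 100d|η|)|B_1|`. -/
def IsRegularBohr {G : Type*} [AddCommGroup G] [Fintype G]
    (Γ : Finset (AddChar G ℂ)) (ε : AddChar G ℂ → ℝ) : Prop :=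
  ∀ η : ℝ, (Γ.card : ℝ) * |η| ≤ 1 / 100 →
    (1 - 100 * Γ.card * |η|) * (bohrSet Γ ε).card
        < ((bohrSet Γ (fun γ => (1 + η) * ε γ)).card : ℝ) ∧
    ((bohrSet Γ (fun γ => (1 + η) * ε γ)).card : ℝ)
        < (1 + 100 * Γ.card * |η|) * (bohrSet Γ ε).card

open Classical in
/-- Indicator function of a finite set, real-valued. -/
noncomputable def indic {G : Type*} (B : Finset G) : G → ℝ := fun x => if x ∈ B then 1 else 0

/-- Normalized indicator (uniform measure) of a finite set. -/
noncomputable def muFn {G : Type*} (B : Finset G) : G → ℝ := fun x => indic B x / B.card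

/-- Convolution `(f ∗ g)(x) = ∑_y f(y) g(x − y)` on a finite abelian group. -/
noncomputable def conv {G : Type*} [AddCommGroup G] [Fintype G] (f g : G → ℝ) : G → ℝ :=
  fun x => ∑ y, f y * g (x - y)


open MeasureTheory Metric

noncomputable def psiFn {G : Type*} [AddCommGroup G] (γ : AddChar G ℂ) (n : G) :
    AddCircle (1 : ℝ) := ((Complex.arg (γ n) / (2 * Real.pi) : ℝ) : AddCircle (1 : ℝ))

lemma addChar_ne_zero {G : Type*} [AddCommGroup G] (γ : AddChar G ℂ) (n : G) : γ n ≠ 0 := by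
  have h := γ.map_add_eq_mul n (-n)
  simp only [add_neg_cancel, AddChar.map_zero_eq_one] at h
  exact left_ne_zero_of_mul_eq_one h.symm

lemma bohrNorm_eq_norm_psi {G : Type*} [AddCommGroup G] (γ : AddChar G ℂ) (n : G) :
    bohrNorm (γ n) = ‖psiFn γ n‖ := by
  have hpi : 0 < Real.pi := Real.pi_pos
  have habs : |Complex.arg (γ n) / (2 * Real.pi)| ≤ |(1:ℝ)| / 2 := by
    rw [abs_div, abs_of_pos (by linarith : (0:ℝ) < 2 * Real.pi)]
    rw [div_le_div_iff₀ (by linarith) (by norm_num)]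
    have := Complex.abs_arg_le_pi (γ n)
    simp only [abs_one]
    linarith
  rw [psiFn, AddCircle.norm_coe_eq_abs_iff (1:ℝ) one_ne_zero |>.mpr habs,
    abs_div, abs_of_pos (by linarith : (0:ℝ) < 2 * Real.pi)]
  rfl

lemma psiFn_sub {G : Type*} [AddCommGroup G] (γ : AddChar G ℂ) (a b : G) :
    psiFn γ (a - b) = psiFn γ a - psiFn γ b := by
  have hpi : (Real.pi : ℝ) ≠ 0 := Real.pi_ne_zero
  have h : γ (a - b) * γ b = γ a := by
    rw [← γ.map_add_eq_mul, sub_add_cancel]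
  have hang : (Complex.arg (γ a) : Real.Angle) =
      ((Complex.arg (γ (a - b)) + Complex.arg (γ b) : ℝ) : Real.Angle) := by
    rw [← h, Complex.arg_mul_coe_angle (addChar_ne_zero γ (a-b)) (addChar_ne_zero γ b)]
    rw [Real.Angle.coe_add]
  obtain ⟨k, hk⟩ := Real.Angle.angle_eq_iff_two_pi_dvd_sub.mp hang
  have hre : Complex.arg (γ (a-b)) / (2 * Real.pi) =
      Complex.arg (γ a) / (2 * Real.pi) - Complex.arg (γ b) / (2 * Real.pi) + (-k : ℝ) := by
    field_simp
    linarith [hk]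
  rw [psiFn, psiFn, psiFn, hre]
  push_cast
  rw [AddCircle.coe_add]
  have : (((-k : ℤ) : ℝ) : AddCircle (1:ℝ)) = 0 := by
    rw [AddCircle.coe_eq_zero_iff]
    exact ⟨-k, by simp⟩
  push_cast at this
  rw [this, add_zero, AddCircle.coe_sub]

open scoped ENNReal

lemma volume_ball_unit (x : AddCircle (1:ℝ)) (r : ℝ) :
    MeasureTheory.volume (Metric.ball x r) = ENNReal.ofReal (min 1 (2*r)) := by
  rw [← measure_congr AddCircle.closedBall_ae_eq_ball, AddCircle.volume_closedBall]

/-- Size lower bound for Bohr sets: `|B(Γ, ε)| ≥ (N/2) · ∏_{γ∈Γ} ε_γ`. -/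
theorem bohrSet_card_lower {G : Type*} [AddCommGroup G] [Fintype G]
    (Γ : Finset (AddChar G ℂ)) (ε : AddChar G ℂ → ℝ)
    (hε : ∀ γ ∈ Γ, 0 < ε γ ∧ ε γ ≤ 1) :
    (Fintype.card G : ℝ) / 2 * ∏ γ ∈ Γ, ε γ ≤ ((bohrSet Γ ε).card : ℝ) := by
  classical
  set N := Fintype.card G with hN
  have hprodpos : 0 < ∏ γ ∈ Γ, ε γ := Finset.prod_pos fun γ hγ => (hε γ hγ).1
  set c : ℝ := (N : ℝ) * ∏ γ ∈ Γ, ε γ with hc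
  have hcpos : 0 < c := mul_pos (by exact_mod_cast Fintype.card_pos) hprodpos
  let Θ := (↥Γ) → AddCircle (1:ℝ)
  let E : G → Set Θ := fun n => Set.univ.pi fun i => Metric.ball (psiFn i.1 n) (ε i.1 / 2)
  have hEmeas : ∀ n, MeasurableSet (E n) :=
    fun n => MeasurableSet.univ_pi fun i => measurableSet_ball
  have hEvol : ∀ n, MeasureTheory.volume (E n) = ENNReal.ofReal (∏ γ ∈ Γ, ε γ) := by
    intro n
    rw [MeasureTheory.volume_pi_pi]
    have h1 : ∀ i : ↥Γ, MeasureTheory.volume (Metric.ball (psiFn i.1 n) (ε i.1 / 2))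
        = ENNReal.ofReal (ε i.1) := by
      intro i
      rw [volume_ball_unit]
      congr 1
      rw [min_eq_right (by linarith [(hε i.1 i.2).2])]
      ring
    simp_rw [h1]
    rw [← ENNReal.ofReal_prod_of_nonneg (fun i _ => (hε i.1 i.2).1.le)]
    congr 1
    exact (Finset.prod_coe_sort Γ ε)
  haveI : MeasureTheory.IsProbabilityMeasure
      (MeasureTheory.volume : MeasureTheory.Measure (AddCircle (1:ℝ))) :=
    ⟨by rw [AddCircle.measure_univ]; simp⟩
  let F : Θ → ℕ := fun θ => (Finset.univ.filter fun n : G => θ ∈ E n).card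
  have hint : ∫⁻ θ, (F θ : ℝ≥0∞) = ENNReal.ofReal c := by
    have hFsum : ∀ θ : Θ, (F θ : ℝ≥0∞) = ∑ n : G, (E n).indicator (fun _ => 1) θ := by
      intro θ
      simp only [F, Finset.card_filter]
      push_cast
      refine Finset.sum_congr rfl fun n _ => ?_
      by_cases h : θ ∈ E n <;> simp [Set.indicator_apply, h]
    simp_rw [hFsum]
    rw [MeasureTheory.lintegral_finset_sum _
      (fun n _ => (measurable_const.indicator (hEmeas n)))]
    simp_rw [MeasureTheory.lintegral_indicator (hEmeas _), MeasureTheory.lintegral_const,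
      MeasureTheory.Measure.restrict_apply MeasurableSet.univ, Set.univ_inter, one_mul]
    simp_rw [hEvol]
    rw [Finset.sum_const, Finset.card_univ, hc, nsmul_eq_mul,
      ENNReal.ofReal_mul (by positivity), ENNReal.ofReal_natCast]
  obtain ⟨θ, hθ⟩ : ∃ θ : Θ, c / 2 < (F θ : ℝ) := by
    by_contra hcon
    push_neg at hcon
    have hle : ∫⁻ θ, (F θ : ℝ≥0∞) ≤ ENNReal.ofReal (c / 2) := by
      calc ∫⁻ θ, (F θ : ℝ≥0∞) ≤ ∫⁻ _, ENNReal.ofReal (c / 2) := by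
            refine MeasureTheory.lintegral_mono fun θ => ?_
            rw [← ENNReal.ofReal_natCast]
            exact ENNReal.ofReal_le_ofReal (hcon θ)
        _ = ENNReal.ofReal (c / 2) := by
            rw [MeasureTheory.lintegral_const, MeasureTheory.measure_univ, mul_one]
    rw [hint] at hle
    rw [ENNReal.ofReal_le_ofReal_iff (by linarith)] at hle
    linarith
  set A := Finset.univ.filter fun n : G => θ ∈ E n with hA
  have hApos : 0 < A.card := by
    by_contra h
    push_neg at h
    interval_cases h' : A.card
    · simp only [F, ← hA, h'] at hθ
      norm_num at hθ
      linarith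
  obtain ⟨a₀, ha₀⟩ := Finset.card_pos.mp hApos
  have hdist : ∀ a ∈ A, ∀ γ (hγ : γ ∈ Γ), dist (θ ⟨γ, hγ⟩) (psiFn γ a) < ε γ / 2 := by
    intro a ha γ hγ
    have h := (Finset.mem_filter.mp ha).2
    exact h ⟨γ, hγ⟩ (Set.mem_univ _)
  have hmap : ∀ a ∈ A, a - a₀ ∈ bohrSet Γ ε := by
    intro a ha
    simp only [bohrSet, Finset.mem_filter, Finset.mem_univ, true_and]
    intro γ hγ
    rw [bohrNorm_eq_norm_psi, psiFn_sub]
    calc ‖psiFn γ a - psiFn γ a₀‖ = dist (psiFn γ a) (psiFn γ a₀) := (dist_eq_norm _ _).symm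
      _ ≤ dist (psiFn γ a) (θ ⟨γ, hγ⟩) + dist (θ ⟨γ, hγ⟩) (psiFn γ a₀) := dist_triangle _ _ _
      _ < ε γ / 2 + ε γ / 2 := by
          have h1 := hdist a ha γ hγ
          have h2 := hdist a₀ ha₀ γ hγ
          rw [dist_comm] at h1
          exact add_lt_add h1 h2
      _ = ε γ := by ring
  have hcard : A.card ≤ (bohrSet Γ ε).card := by
    refine Finset.card_le_card_of_injOn (fun a => a - a₀) hmap ?_
    intro x _ y _ h
    simpa using sub_left_injective h
  have hFA : (F θ : ℝ) = (A.card : ℝ) := rfl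
  have : c / 2 < ((bohrSet Γ ε).card : ℝ) := by
    refine lt_of_lt_of_le hθ ?_
    rw [hFA]
    exact_mod_cast hcard
  calc (N : ℝ) / 2 * ∏ γ ∈ Γ, ε γ = c / 2 := by rw [hc]; ring
    _ ≤ ((bohrSet Γ ε).card : ℝ) := this.le
end

section
/- Let G be a finite abelian group, let Γ be a finite set of characters of G, and let ε = (ε_γ)_{γ∈Γ} be a tuple of reals in (0,1]. Then |B(Γ, ε)| ≤ 8^{|Γ|+1} · |B(Γ, ε/2)|. -/
private lemma abs_sub_lt_of_floor_div_eq {x y c : ℝ} (hc : 0 < c)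
    (h : ⌊x / c⌋ = ⌊y / c⌋) : |x - y| < c := by
  have h1 : (⌊x / c⌋ : ℝ) ≤ x / c := Int.floor_le _
  have h2 : x / c < ⌊x / c⌋ + 1 := Int.lt_floor_add_one _
  have h3 : (⌊y / c⌋ : ℝ) ≤ y / c := Int.floor_le _
  have h4 : y / c < ⌊y / c⌋ + 1 := Int.lt_floor_add_one _
  rw [h] at h1 h2
  have hd : |x / c - y / c| < 1 := by
    rw [abs_sub_lt_iff]; constructor <;> linarith
  have h5 : |x - y| / c < 1 := by rwa [← sub_div, abs_div, abs_of_pos hc] at hd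
  have := (div_lt_one hc).mp h5
  linarith

private lemma arg_div_of_norm_one {z w : ℂ} (hz : ‖z‖ = 1)
    (hw : ‖w‖ = 1) (h : |Complex.arg z - Complex.arg w| < Real.pi) :
    Complex.arg (z / w) = Complex.arg z - Complex.arg w := by
  have hz' : z = Complex.exp (Complex.arg z * Complex.I) := by
    conv_lhs => rw [← Complex.norm_mul_exp_arg_mul_I z]
    rw [hz]; simp
  have hw' : w = Complex.exp (Complex.arg w * Complex.I) := by
    conv_lhs => rw [← Complex.norm_mul_exp_arg_mul_I w]
    rw [hw]; simp
  have : z / w = Complex.exp ((↑(Complex.arg z - Complex.arg w)) * Complex.I) := by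
    rw [Complex.ofReal_sub, sub_mul, Complex.exp_sub, ← hz', ← hw']
  rw [this, Complex.arg_exp_mul_I, toIocMod_eq_self]
  rw [abs_lt] at h
  constructor
  · linarith
  · linarith

/-- Doubling-type bound for Bohr sets: `|B(Γ, ε)| ≤ 8^{|Γ|+1} · |B(Γ, ε/2)|`. -/
theorem bohrSet_card_halving {G : Type*} [AddCommGroup G] [Fintype G]
    (Γ : Finset (AddChar G ℂ)) (ε : AddChar G ℂ → ℝ)
    (hε : ∀ γ ∈ Γ, 0 < ε γ ∧ ε γ ≤ 1) :
    ((bohrSet Γ ε).card : ℝ) ≤ 8 ^ (Γ.card + 1) * ((bohrSet Γ (fun γ => ε γ / 2)).card : ℝ) := by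
  classical
  set B := bohrSet Γ ε with hB
  set B' := bohrSet Γ (fun γ => ε γ / 2) with hB'
  have habs : ∀ (γ : AddChar G ℂ) (n : G), ‖γ n‖ = 1 := by
    intro γ n
    exact γ.norm_apply n
  -- the bucketing function
  set F : G → (↥Γ → ℤ) := fun n γ => ⌊Complex.arg (γ.1 n) / (Real.pi * ε γ.1 / 2)⌋ with hF
  -- key: same bucket implies difference in B'
  have key : ∀ n ∈ B, ∀ m ∈ B, F n = F m → m - n ∈ B' := by
    intro n hn m hm hFnm
    simp only [hB', bohrSet, Finset.mem_filter, Finset.mem_univ, true_and] at *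
    intro γ hγ
    obtain ⟨hε0, hε1⟩ := hε γ hγ
    have hc : 0 < Real.pi * ε γ / 2 := by positivity
    have hfl : ⌊Complex.arg (γ n) / (Real.pi * ε γ / 2)⌋
        = ⌊Complex.arg (γ m) / (Real.pi * ε γ / 2)⌋ := by
      have := congrFun hFnm ⟨γ, hγ⟩
      simpa [hF] using this
    have hlt : |Complex.arg (γ n) - Complex.arg (γ m)| < Real.pi * ε γ / 2 :=
      abs_sub_lt_of_floor_div_eq hc hfl
    have hltpi : |Complex.arg (γ m) - Complex.arg (γ n)| < Real.pi := by
      rw [abs_sub_comm] at hlt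
      have : Real.pi * ε γ / 2 ≤ Real.pi := by nlinarith [Real.pi_pos]
      linarith
    have hdiv : γ (m - n) = γ m / γ n := γ.map_sub_eq_div m n
    have harg : Complex.arg (γ (m - n)) = Complex.arg (γ m) - Complex.arg (γ n) := by
      rw [hdiv]; exact arg_div_of_norm_one (habs γ m) (habs γ n) hltpi
    rw [abs_sub_comm] at hlt
    have h2pi : (0:ℝ) < 2 * Real.pi := by positivity
    rw [bohrNorm, harg]
    rw [div_lt_iff₀ h2pi]
    calc |Complex.arg (γ m) - Complex.arg (γ n)| < Real.pi * ε γ / 2 := hlt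
      _ ≤ ε γ / 2 * (2 * Real.pi) := by nlinarith [Real.pi_pos]
  -- buckets land in a small set
  set T : Finset (↥Γ → ℤ) := Fintype.piFinset (fun _ => Finset.Icc (-4 : ℤ) 3) with hT
  have hmaps : ∀ n ∈ B, F n ∈ T := by
    intro n hn
    simp only [hT, Fintype.mem_piFinset, Finset.mem_Icc]
    intro γ
    simp only [hF]
    have hγ := γ.2
    obtain ⟨hε0, hε1⟩ := hε γ.1 hγ
    have hc : 0 < Real.pi * ε γ.1 / 2 := by positivity
    have hargB : |Complex.arg (γ.1 n)| < 2 * Real.pi * ε γ.1 := by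
      simp only [hB, bohrSet, Finset.mem_filter, Finset.mem_univ, true_and] at hn
      have := hn γ.1 hγ
      rw [bohrNorm, div_lt_iff₀ (by positivity : (0:ℝ) < 2 * Real.pi)] at this
      calc |Complex.arg (γ.1 n)| < ε γ.1 * (2 * Real.pi) := this
        _ = 2 * Real.pi * ε γ.1 := by ring
    rw [abs_lt] at hargB
    constructor
    · rw [Int.le_floor]
      push_cast
      rw [le_div_iff₀ hc]
      nlinarith
    · have : ⌊Complex.arg (γ.1 n) / (Real.pi * ε γ.1 / 2)⌋ < 4 := by
        rw [Int.floor_lt]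
        push_cast
        rw [div_lt_iff₀ hc]
        nlinarith
      omega
  -- fibers inject into B'
  have hfiber : ∀ b ∈ T, (B.filter fun n => F n = b).card ≤ B'.card := by
    intro b _
    rcases (B.filter fun n => F n = b).eq_empty_or_nonempty with he | ⟨n₀, hn₀⟩
    · simp [he]
    · simp only [Finset.mem_filter] at hn₀
      apply Finset.card_le_card_of_injOn (fun m => m - n₀)
      · intro m hm
        simp only [Finset.mem_coe, Finset.mem_filter] at hm
        exact key n₀ hn₀.1 m hm.1 (hn₀.2.trans hm.2.symm)
      · intro a _ b _ hab
        simpa using hab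
  have hcount : B.card ≤ B'.card * T.card :=
    Finset.card_le_mul_card_image_of_maps_to hmaps B'.card hfiber
  have hTcard : T.card = 8 ^ Γ.card := by
    simp only [hT, Fintype.card_piFinset]
    simp [Fintype.card_coe]
  rw [hTcard] at hcount
  have : (B.card : ℝ) ≤ (B'.card : ℝ) * 8 ^ Γ.card := by exact_mod_cast hcount
  have h8 : (8:ℝ) ^ (Γ.card + 1) = 8 * 8 ^ Γ.card := by ring
  rw [h8]
  nlinarith [Nat.cast_nonneg (α := ℝ) B'.card, pow_nonneg (by norm_num : (0:ℝ) ≤ 8) Γ.card]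
end
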